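/- Let k₁, k₂ > 0 and 0 < r, let Φ(x,y) = (x − 1/2)² + 4(y − 1/2)² − r², define k(x,y) = k₁ if Φ(x,y) ≤ 0 and k₂ if Φ(x,y) > 0, and let ψ(x,y) = (1/k(x,y)) · sin(πx/2) · Φ(x,y) · (1 + x² + y²). Then the flux field k ∇ψ, defined on the open set {Φ ≠ 0} (where ψ is differentiable), extends to a continuous vector field on ℝ² whose value at every point of the interface {Φ = 0} is sin(πx/2) · (1 + x² + y²) · ∇Φ(x,y); in particular the one-sided limits of k ∇ψ from inside and outside the ellipse agree on the interface. -/

import Mathlib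

open Real

/-- For the manufactured solution `ψ` with piecewise constant diffusion coefficient
`k` across the elliptic interface `Φ = 0`, the flux field `k ∇ψ` (defined on the open
set `{Φ ≠ 0}` where `ψ` is differentiable) extends to a continuous vector field on
`ℝ²` whose value at every interface point equals
`sin(πx/2) (1 + x² + y²) ∇Φ(x,y)` with `∇Φ(x,y) = (2(x − 1/2), 8(y − 1/2))`;
in particular the one-sided limits of `k ∇ψ` from inside and outside agree on the
interface. -/
theorem manufactured_flux_continuous_elliptic_interface
    (k₁ k₂ r : ℝ) (hk₁ : 0 < k₁) (hk₂ : 0 < k₂) (hr : 0 < r)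
    (Φ : ℝ × ℝ → ℝ)
    (hΦ : ∀ q : ℝ × ℝ, Φ q = (q.1 - 1 / 2) ^ 2 + 4 * (q.2 - 1 / 2) ^ 2 - r ^ 2)
    (k : ℝ × ℝ → ℝ) (hk : ∀ q, k q = if Φ q ≤ 0 then k₁ else k₂)
    (ψ : ℝ × ℝ → ℝ)
    (hψ : ∀ q : ℝ × ℝ, ψ q = (1 / k q) * Real.sin (π * q.1 / 2) * Φ q *
        (1 + q.1 ^ 2 + q.2 ^ 2)) :
    ∃ G : ℝ × ℝ → ℝ × ℝ, Continuous G ∧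
      (∀ q : ℝ × ℝ, Φ q ≠ 0 →
        G q = k q • (fderiv ℝ ψ q (1, 0), fderiv ℝ ψ q (0, 1))) ∧
      (∀ q : ℝ × ℝ, Φ q = 0 →
        G q = (Real.sin (π * q.1 / 2) * (1 + q.1 ^ 2 + q.2 ^ 2)) •
          (2 * (q.1 - 1 / 2), 8 * (q.2 - 1 / 2))) := by
  classical
  set s : ℝ × ℝ → ℝ := fun p =>
    Real.sin (π * p.1 / 2) * ((p.1 - 1 / 2) ^ 2 + 4 * (p.2 - 1 / 2) ^ 2 - r ^ 2) *
      (1 + p.1 ^ 2 + p.2 ^ 2) with hs_def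
  -- derivative of s at any point
  have hsder : ∀ q : ℝ × ℝ, ∃ D : (ℝ × ℝ) →L[ℝ] ℝ, HasFDerivAt s D q ∧
      D (1, 0) = π / 2 * Real.cos (π * q.1 / 2) *
          ((q.1 - 1 / 2) ^ 2 + 4 * (q.2 - 1 / 2) ^ 2 - r ^ 2) * (1 + q.1 ^ 2 + q.2 ^ 2)
        + Real.sin (π * q.1 / 2) * (2 * (q.1 - 1 / 2)) * (1 + q.1 ^ 2 + q.2 ^ 2)
        + Real.sin (π * q.1 / 2) *
          ((q.1 - 1 / 2) ^ 2 + 4 * (q.2 - 1 / 2) ^ 2 - r ^ 2) * (2 * q.1) ∧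
      D (0, 1) = Real.sin (π * q.1 / 2) * (8 * (q.2 - 1 / 2)) * (1 + q.1 ^ 2 + q.2 ^ 2)
        + Real.sin (π * q.1 / 2) *
          ((q.1 - 1 / 2) ^ 2 + 4 * (q.2 - 1 / 2) ^ 2 - r ^ 2) * (2 * q.2) := by
    intro q
    have hx : HasFDerivAt (fun p : ℝ × ℝ => p.1)
        (ContinuousLinearMap.fst ℝ ℝ ℝ) q := hasFDerivAt_fst
    have hy : HasFDerivAt (fun p : ℝ × ℝ => p.2)
        (ContinuousLinearMap.snd ℝ ℝ ℝ) q := hasFDerivAt_snd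
    have harg : HasFDerivAt (fun p : ℝ × ℝ => π * p.1 / 2)
        ((π / 2) • ContinuousLinearMap.fst ℝ ℝ ℝ) q := by
      have he : (fun p : ℝ × ℝ => π * p.1 / 2) = fun p : ℝ × ℝ => (π / 2) * p.1 := by
        funext p; ring
      rw [he]; exact hx.const_mul (π / 2)
    have hsin : HasFDerivAt (fun p : ℝ × ℝ => Real.sin (π * p.1 / 2))
        (Real.cos (π * q.1 / 2) • (π / 2) • ContinuousLinearMap.fst ℝ ℝ ℝ) q :=
      by have := (Real.hasDerivAt_sin (π * q.1 / 2)).comp_hasFDerivAt q harg; exact this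
    have hphi : HasFDerivAt
        (fun p : ℝ × ℝ => (p.1 - 1 / 2) ^ 2 + 4 * (p.2 - 1 / 2) ^ 2 - r ^ 2) _ q :=
      ((((hasDerivAt_pow 2 (q.1 - 1 / 2)).comp_hasFDerivAt q (hx.sub_const (1/2))).add
        (((hasDerivAt_pow 2 (q.2 - 1 / 2)).comp_hasFDerivAt q
          (hy.sub_const (1/2))).const_mul 4)).sub_const (r ^ 2))
    have hw : HasFDerivAt (fun p : ℝ × ℝ => 1 + p.1 ^ 2 + p.2 ^ 2) _ q :=
      ((hasFDerivAt_const (1:ℝ) q).add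
        ((hasDerivAt_pow 2 q.1).comp_hasFDerivAt q hx)).add
        ((hasDerivAt_pow 2 q.2).comp_hasFDerivAt q hy)
    have hD := (hsin.mul hphi).mul hw
    refine ⟨_, hD, ?_, ?_⟩ <;>
    · simp [ContinuousLinearMap.smul_apply, ContinuousLinearMap.add_apply,
        ContinuousLinearMap.sub_apply, ContinuousLinearMap.comp_apply]
      ring
  -- the extension G
  refine ⟨fun q =>
    (π / 2 * Real.cos (π * q.1 / 2) *
          ((q.1 - 1 / 2) ^ 2 + 4 * (q.2 - 1 / 2) ^ 2 - r ^ 2) * (1 + q.1 ^ 2 + q.2 ^ 2)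
        + Real.sin (π * q.1 / 2) * (2 * (q.1 - 1 / 2)) * (1 + q.1 ^ 2 + q.2 ^ 2)
        + Real.sin (π * q.1 / 2) *
          ((q.1 - 1 / 2) ^ 2 + 4 * (q.2 - 1 / 2) ^ 2 - r ^ 2) * (2 * q.1),
      Real.sin (π * q.1 / 2) * (8 * (q.2 - 1 / 2)) * (1 + q.1 ^ 2 + q.2 ^ 2)
        + Real.sin (π * q.1 / 2) *
          ((q.1 - 1 / 2) ^ 2 + 4 * (q.2 - 1 / 2) ^ 2 - r ^ 2) * (2 * q.2)), ?_, ?_, ?_⟩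
  · fun_prop
  · intro q hq
    obtain ⟨D, hD, hD1, hD2⟩ := hsder q
    have hΦfun : Φ = fun p : ℝ × ℝ =>
        (p.1 - 1 / 2) ^ 2 + 4 * (p.2 - 1 / 2) ^ 2 - r ^ 2 := funext hΦ
    have hΦcont : Continuous Φ := by rw [hΦfun]; fun_prop
    set c : ℝ := k q with hc
    have hcpos : 0 < c := by
      rw [hc, hk q]; split <;> assumption
    -- ψ agrees with (1/c) • s near q
    have hev : ψ =ᶠ[nhds q] fun p => (1 / c) • s p := by
      rcases lt_or_gt_of_ne hq with h | h
      · have hU : IsOpen {p : ℝ × ℝ | Φ p < 0} := isOpen_lt hΦcont continuous_const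
        filter_upwards [hU.mem_nhds h] with p hp
        have : k p = c := by rw [hk p, hc, hk q, if_pos hp.le, if_pos h.le]
        rw [hψ p, this, hΦ p]
        simp only [smul_eq_mul, hs_def]; ring
      · have hU : IsOpen {p : ℝ × ℝ | 0 < Φ p} := isOpen_lt continuous_const hΦcont
        filter_upwards [hU.mem_nhds h] with p hp
        have : k p = c := by
          rw [hk p, hc, hk q, if_neg (not_le.2 hp), if_neg (not_le.2 h)]
        rw [hψ p, this, hΦ p]
        simp only [smul_eq_mul, hs_def]; ring
    have hψder : HasFDerivAt ψ ((1 / c) • D) q :=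
      ((hD.const_smul (1 / c)).congr_of_eventuallyEq hev)
    rw [hψder.fderiv]
    have hcne : c ≠ 0 := ne_of_gt hcpos
    simp only [ContinuousLinearMap.smul_apply, smul_eq_mul, Prod.smul_mk, hD1, hD2]
    rw [Prod.mk.injEq]
    constructor <;> field_simp <;> ring
  · intro q hq
    rw [hΦ q] at hq
    rw [Prod.smul_mk, Prod.mk.injEq]
    constructor
    · simp only [smul_eq_mul]
      linear_combination (π / 2 * Real.cos (π * q.1 / 2) * (1 + q.1 ^ 2 + q.2 ^ 2) + Real.sin (π * q.1 / 2) * (2 * q.1)) * hq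
    · simp only [smul_eq_mul]
      linear_combination (Real.sin (π * q.1 / 2) * (2 * q.2)) * hq
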